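/- arXiv:math-ph/0605002 — 4 statements merged into one kernel-verified Lean document; each statement's English description precedes it below -/
import Mathlib

section
/- For any a > 0 and any b ∈ ℝ, the sum over integers k of exp(-a(k-b)²) satisfies √(π/a) - 1 ≤ Σ_{k∈ℤ} exp(-a(k-b)²) ≤ √(π/a) + 1. -/
open Real MeasureTheory Set

theorem gaussian_lattice_sum_bounds (a b : ℝ) (ha : 0 < a) :
    Real.sqrt (π / a) - 1 ≤ ∑' k : ℤ, Real.exp (-a * ((k : ℝ) - b) ^ 2) ∧
    ∑' k : ℤ, Real.exp (-a * ((k : ℝ) - b) ^ 2) ≤ Real.sqrt (π / a) + 1 := by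
  classical
  set f : ℝ → ℝ := fun x => Real.exp (-a * (x - b) ^ 2) with hf_def
  have hf_int : Integrable f :=
    (integrable_exp_neg_mul_sq ha).comp_sub_right b
  have hf_integral : ∫ x, f x = Real.sqrt (π / a) := by
    rw [hf_def]
    rw [integral_sub_right_eq_self (fun x => Real.exp (-a * x ^ 2)) b]
    exact integral_gaussian a
  have hf_nonneg : ∀ x, 0 ≤ f x := fun x => (Real.exp_pos _).le
  have hf_le_one : ∀ x, f x ≤ 1 := by
    intro x
    rw [hf_def]
    apply Real.exp_le_one_iff.mpr
    nlinarith [sq_nonneg (x - b)]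
  have hmono : ∀ x y : ℝ, x ≤ y → y ≤ b → f x ≤ f y := by
    intro x y hxy hyb
    simp only [hf_def]
    apply Real.exp_le_exp.mpr
    nlinarith [mul_nonneg ha.le (mul_nonneg (by linarith : (0:ℝ) ≤ y - x)
        (by linarith : (0:ℝ) ≤ 2 * b - x - y))]
  have hanti : ∀ x y : ℝ, b ≤ x → x ≤ y → f y ≤ f x := by
    intro x y hbx hxy
    simp only [hf_def]
    apply Real.exp_le_exp.mpr
    nlinarith [mul_nonneg ha.le (mul_nonneg (by linarith : (0:ℝ) ≤ y - x)
        (by linarith : (0:ℝ) ≤ x + y - 2 * b))]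
  set m : ℤ := ⌊b⌋ with hm_def
  have hmb : (m : ℝ) ≤ b := Int.floor_le b
  have hbm1 : b < (m : ℝ) + 1 := Int.lt_floor_add_one b
  have hvol : ∀ x y : ℝ, x ≤ y → (volume (Ico x y)).toReal = y - x := by
    intro x y hxy
    rw [Real.volume_Ico, ENNReal.toReal_ofReal (by linarith)]
  ---------------------------------------------------------------------------
  -- Upper bound partition: endpoints e k, cells s k = Ico (e k) (e (k+1))
  ---------------------------------------------------------------------------
  set e : ℤ → ℝ := fun k => if k ≤ m then (k : ℝ) else if k = m + 1 then b else (k : ℝ) - 1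
    with he_def
  have he1 : ∀ k : ℤ, k ≤ m → e k = (k : ℝ) := by
    intro k hk; simp only [he_def]; rw [if_pos hk]
  have he2 : e (m + 1) = b := by
    simp only [he_def]; rw [if_neg (by omega)]; simp
  have he3 : ∀ k : ℤ, m + 2 ≤ k → e k = (k : ℝ) - 1 := by
    intro k hk; simp only [he_def]; rw [if_neg (by omega), if_neg (by omega)]
  have he_step : ∀ k : ℤ, e k ≤ e (k + 1) := by
    intro k
    rcases le_or_gt k (m - 1) with hk | hk
    · rw [he1 k (by omega), he1 (k + 1) (by omega)]; push_cast; linarith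
    rcases eq_or_lt_of_le (show m - 1 + 1 ≤ k from hk) with hk' | hk'
    · have hkm : k = m := by omega
      rw [hkm, he1 m le_rfl, he2]; exact hmb
    rcases eq_or_lt_of_le (by omega : m + 1 ≤ k) with hk'' | hk''
    · rw [← hk'', he2, he3 (m + 1 + 1) (by omega)]
      push_cast; linarith
    · rw [he3 k (by omega), he3 (k + 1) (by omega)]; push_cast; linarith
  have he_mono : Monotone e := monotone_int_of_le_succ he_step
  set s : ℤ → Set ℝ := fun k => Ico (e k) (e (k + 1)) with hs_def
  have hs_meas : ∀ k, MeasurableSet (s k) := fun k => measurableSet_Ico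
  have hs_disj : Pairwise (Function.onFun Disjoint s) := by
    have key : ∀ i j : ℤ, i < j → Disjoint (s i) (s j) := by
      intro i j hij
      rw [hs_def]
      rw [Set.Ico_disjoint_Ico]
      have h1 : e (i + 1) ≤ e j := he_mono (by omega)
      calc e (i + 1) ⊓ e (j + 1) ≤ e (i + 1) := inf_le_left
        _ ≤ e j := h1
        _ ≤ e i ⊔ e j := le_sup_right
    intro i j hij
    rcases lt_or_gt_of_ne hij with h | h
    · exact key i j h
    · exact (key j i h).symm
  have hs_union : (⋃ k, s k) = univ := by
    ext x
    simp only [mem_iUnion, mem_univ, iff_true]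
    rcases lt_or_ge x b with hx | hx
    · refine ⟨⌊x⌋, ?_⟩
      simp only [hs_def, mem_Ico]
      refine ⟨?_, ?_⟩
      · rw [he1 ⌊x⌋ (Int.floor_le_floor hx.le)]; exact Int.floor_le x
      · rcases eq_or_lt_of_le (Int.floor_le_floor hx.le : ⌊x⌋ ≤ m) with h2 | h2
        · rw [show ⌊x⌋ + 1 = m + 1 by omega, he2]; exact hx
        · rw [he1 (⌊x⌋ + 1) (by omega)]; push_cast
          exact Int.lt_floor_add_one x
    · refine ⟨⌊x⌋ + 1, ?_⟩
      simp only [hs_def, mem_Ico]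
      refine ⟨?_, ?_⟩
      · rcases eq_or_lt_of_le (Int.le_floor.mpr (le_trans hmb hx) : m ≤ ⌊x⌋) with h2 | h2
        · rw [show ⌊x⌋ + 1 = m + 1 by omega, he2]; exact hx
        · rw [he3 (⌊x⌋ + 1) (by omega)]; push_cast
          have := Int.floor_le x
          linarith
      · rcases eq_or_lt_of_le (Int.le_floor.mpr (le_trans hmb hx) : m ≤ ⌊x⌋) with h2 | h2
        · rw [he3 (⌊x⌋ + 1 + 1) (by omega)]; push_cast
          have := Int.lt_floor_add_one x
          linarith
        · rw [he3 (⌊x⌋ + 1 + 1) (by omega)]; push_cast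
          have := Int.lt_floor_add_one x
          linarith
  have hs_hasSum : HasSum (fun k => ∫ x in s k, f x) (Real.sqrt (π / a)) := by
    have h := MeasureTheory.hasSum_integral_iUnion hs_meas hs_disj
      (by rw [hs_union]; exact hf_int.integrableOn)
    rwa [hs_union, MeasureTheory.Measure.restrict_univ, hf_integral] at h
  set c : ℤ → ℝ := fun k => (if k = m then ((m : ℝ) + 1 - b) else 0) +
      (if k = m + 1 then (b - (m : ℝ)) else 0) with hc_def
  have hc_hasSum : HasSum c 1 := by
    have h1 : HasSum (fun k : ℤ => if k = m then ((m : ℝ) + 1 - b) else 0) ((m : ℝ) + 1 - b) :=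
      hasSum_ite_eq m _
    have h2 : HasSum (fun k : ℤ => if k = m + 1 then (b - (m : ℝ)) else 0) (b - (m : ℝ)) :=
      hasSum_ite_eq (m + 1) _
    have h3 := h1.add h2
    rw [show (m : ℝ) + 1 - b + (b - (m : ℝ)) = 1 by ring] at h3
    exact h3
  -- termwise upper bound
  have hterm_up : ∀ k : ℤ, f (k : ℝ) ≤ (∫ x in s k, f x) + c k := by
    intro k
    rcases le_or_gt k (m - 1) with hk | hk
    · -- f increasing on s k = Ico k (k+1)
      have hsk : s k = Ico (k : ℝ) ((k : ℝ) + 1) := by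
        simp only [hs_def]; rw [he1 k (by omega), he1 (k + 1) (by omega)]; push_cast; rfl
      have hck : c k = 0 := by
        simp only [hc_def]; rw [if_neg (by omega), if_neg (by omega)]; ring
      rw [hsk, hck, add_zero]
      have hkm : (k : ℝ) + 1 ≤ (m : ℝ) := by exact_mod_cast (by omega : k + 1 ≤ m)
      have hle : f (k : ℝ) * (volume (Ico (k : ℝ) ((k : ℝ) + 1))).toReal
          ≤ ∫ x in Ico (k : ℝ) ((k : ℝ) + 1), f x := by
        refine MeasureTheory.setIntegral_ge_of_const_le_real measurableSet_Ico
          (by rw [Real.volume_Ico]; exact ENNReal.ofReal_ne_top) ?_ hf_int.integrableOn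
        intro x hx
        exact hmono _ x hx.1 (by have := hx.2; linarith)
      rw [hvol _ _ (by linarith)] at hle
      linarith
    rcases eq_or_lt_of_le (by omega : m ≤ k) with hk' | hk'
    · -- k = m : peak cell left part
      rw [← hk']
      have hsk : s m = Ico ((m : ℤ) : ℝ) b := by
        simp only [hs_def]; rw [he1 m le_rfl, he2]
      have hck : c m = ((m : ℤ) : ℝ) + 1 - b := by
        simp [hc_def]
      rw [hsk, hck]
      have hle : f ((m : ℤ) : ℝ) * (volume (Ico ((m : ℤ) : ℝ) b)).toReal
          ≤ ∫ x in Ico ((m : ℤ) : ℝ) b, f x := by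
        refine MeasureTheory.setIntegral_ge_of_const_le_real measurableSet_Ico
          (by rw [Real.volume_Ico]; exact ENNReal.ofReal_ne_top) ?_ hf_int.integrableOn
        intro x hx
        exact hmono _ x hx.1 hx.2.le
      rw [hvol _ _ hmb] at hle
      nlinarith [hf_le_one ((m : ℤ) : ℝ), hf_nonneg ((m : ℤ) : ℝ),
        mul_nonneg (by linarith [hf_le_one ((m : ℤ) : ℝ)] : (0:ℝ) ≤ 1 - f ((m : ℤ) : ℝ))
          (by linarith : (0:ℝ) ≤ ((m : ℤ) : ℝ) + 1 - b)]
    rcases eq_or_lt_of_le (by omega : m + 1 ≤ k) with hk'' | hk''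
    · -- k = m + 1 : peak cell right part
      rw [← hk'']
      have hsk : s (m + 1) = Ico b ((m : ℝ) + 1) := by
        simp only [hs_def]; rw [he2, he3 (m + 1 + 1) (by omega)]; push_cast; ring_nf
      have hck : c (m + 1) = b - (m : ℝ) := by
        simp [hc_def]
      rw [hsk, hck]
      have hcast : ((m + 1 : ℤ) : ℝ) = (m : ℝ) + 1 := by push_cast; ring
      rw [hcast]
      have hle : f ((m : ℝ) + 1) * (volume (Ico b ((m : ℝ) + 1))).toReal
          ≤ ∫ x in Ico b ((m : ℝ) + 1), f x := by
        refine MeasureTheory.setIntegral_ge_of_const_le_real measurableSet_Ico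
          (by rw [Real.volume_Ico]; exact ENNReal.ofReal_ne_top) ?_ hf_int.integrableOn
        intro x hx
        exact hanti x _ hx.1 hx.2.le
      rw [hvol _ _ hbm1.le] at hle
      nlinarith [hf_le_one ((m : ℝ) + 1), hf_nonneg ((m : ℝ) + 1),
        mul_nonneg (by linarith [hf_le_one ((m : ℝ) + 1)] : (0:ℝ) ≤ 1 - f ((m : ℝ) + 1))
          (by linarith : (0:ℝ) ≤ b - (m : ℝ))]
    · -- k ≥ m + 2 : f decreasing on s k = Ico (k-1) k
      have hsk : s k = Ico ((k : ℝ) - 1) (k : ℝ) := by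
        simp only [hs_def]; rw [he3 k (by omega), he3 (k + 1) (by omega)]; push_cast; ring_nf
      have hck : c k = 0 := by
        simp only [hc_def]; rw [if_neg (by omega), if_neg (by omega)]; ring
      rw [hsk, hck, add_zero]
      have hkm : (m : ℝ) + 1 ≤ (k : ℝ) - 1 := by
        have : ((m : ℤ) : ℝ) + 2 ≤ (k : ℝ) := by exact_mod_cast (by omega : m + 2 ≤ k)
        linarith
      have hle : f (k : ℝ) * (volume (Ico ((k : ℝ) - 1) (k : ℝ))).toReal
          ≤ ∫ x in Ico ((k : ℝ) - 1) (k : ℝ), f x := by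
        refine MeasureTheory.setIntegral_ge_of_const_le_real measurableSet_Ico
          (by rw [Real.volume_Ico]; exact ENNReal.ofReal_ne_top) ?_ hf_int.integrableOn
        intro x hx
        exact hanti x _ (by have := hx.1; linarith) hx.2.le
      rw [hvol _ _ (by linarith)] at hle
      linarith
  have hg_summable : Summable (fun k : ℤ => (∫ x in s k, f x) + c k) :=
    hs_hasSum.summable.add hc_hasSum.summable
  have hF_summable : Summable (fun k : ℤ => f (k : ℝ)) :=
    Summable.of_nonneg_of_le (fun k => hf_nonneg _) hterm_up hg_summable
  have hup : ∑' k : ℤ, f (k : ℝ) ≤ Real.sqrt (π / a) + 1 := by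
    calc ∑' k : ℤ, f (k : ℝ) ≤ ∑' k : ℤ, ((∫ x in s k, f x) + c k) :=
          Summable.tsum_le_tsum hterm_up hF_summable hg_summable
      _ = Real.sqrt (π / a) + 1 := (hs_hasSum.add hc_hasSum).tsum_eq
  ---------------------------------------------------------------------------
  -- Lower bound partition: t k, covering the complement of the peak cell
  ---------------------------------------------------------------------------
  set t : ℤ → Set ℝ := fun k =>
      if k ≤ m then Ico ((k : ℝ) - 1) (k : ℝ) else Ico (k : ℝ) ((k : ℝ) + 1) with ht_def
  have ht_meas : ∀ k, MeasurableSet (t k) := by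
    intro k; simp only [ht_def]; split_ifs <;> exact measurableSet_Ico
  have ht_disj : Pairwise (Function.onFun Disjoint t) := by
    have key : ∀ i j : ℤ, i < j → Disjoint (t i) (t j) := by
      intro i j hij
      rcases le_or_gt j m with hjm | hjm
      · have him : i ≤ m := by omega
        simp only [ht_def]; rw [if_pos him, if_pos hjm]
        rw [Set.Ico_disjoint_Ico]
        have : (i : ℝ) ≤ (j : ℝ) - 1 := by
          have : ((i : ℤ) : ℝ) + 1 ≤ (j : ℝ) := by exact_mod_cast (by omega : i + 1 ≤ j)
          linarith
        exact le_trans inf_le_left (le_trans this le_sup_right)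
      rcases le_or_gt i m with him | him
      · simp only [ht_def]; rw [if_pos him, if_neg (by omega : ¬ j ≤ m)]
        rw [Set.Ico_disjoint_Ico]
        have : (i : ℝ) ≤ (j : ℝ) := by exact_mod_cast (by omega : i ≤ j)
        exact le_trans inf_le_left (le_trans this le_sup_right)
      · simp only [ht_def]; rw [if_neg (by omega : ¬ i ≤ m), if_neg (by omega : ¬ j ≤ m)]
        rw [Set.Ico_disjoint_Ico]
        have : (i : ℝ) + 1 ≤ (j : ℝ) := by exact_mod_cast (by omega : i + 1 ≤ j)
        exact le_trans inf_le_left (le_trans this le_sup_right)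
    intro i j hij
    rcases lt_or_gt_of_ne hij with h | h
    · exact key i j h
    · exact (key j i h).symm
  have ht_union : (⋃ k, t k) = (Ico (m : ℝ) ((m : ℝ) + 1))ᶜ := by
    ext x
    simp only [mem_iUnion, mem_compl_iff, mem_Ico, not_and, not_lt]
    constructor
    · rintro ⟨k, hk⟩ hmx
      by_cases hkm : k ≤ m
      · simp only [ht_def] at hk; rw [if_pos hkm, mem_Ico] at hk
        have : (k : ℝ) ≤ (m : ℝ) := by exact_mod_cast hkm
        have := hk.2
        linarith
      · simp only [ht_def] at hk; rw [if_neg hkm, mem_Ico] at hk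
        have : (m : ℝ) + 1 ≤ (k : ℝ) := by exact_mod_cast (by omega : m + 1 ≤ k)
        have := hk.1
        linarith
    · intro hx
      rcases lt_or_ge x (m : ℝ) with hxm | hxm
      · refine ⟨⌊x⌋ + 1, ?_⟩
        have hfl : ⌊x⌋ + 1 ≤ m := by
          have : ⌊x⌋ < m := Int.floor_lt.mpr hxm
          omega
        simp only [ht_def]; rw [if_pos hfl, mem_Ico]
        push_cast
        constructor
        · have := Int.floor_le x; linarith
        · have := Int.lt_floor_add_one x; linarith
      · have hx1 : (m : ℝ) + 1 ≤ x := by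
          have := hx hxm
          exact_mod_cast this
        refine ⟨⌊x⌋, ?_⟩
        have hfl : ¬ (⌊x⌋ ≤ m) := by
          have : m + 1 ≤ ⌊x⌋ := Int.le_floor.mpr (by push_cast; linarith)
          omega
        simp only [ht_def]; rw [if_neg hfl, mem_Ico]
        exact ⟨Int.floor_le x, Int.lt_floor_add_one x⟩
  have ht_hasSum : HasSum (fun k => ∫ x in t k, f x)
      (∫ x in (Ico (m : ℝ) ((m : ℝ) + 1))ᶜ, f x) := by
    have h := MeasureTheory.hasSum_integral_iUnion ht_meas ht_disj
      (by rw [ht_union]; exact hf_int.integrableOn)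
    rwa [ht_union] at h
  have hIco_le : ∫ x in Ico (m : ℝ) ((m : ℝ) + 1), f x ≤ 1 := by
    have h1 : ∫ x in Ico (m : ℝ) ((m : ℝ) + 1), f x
        ≤ ∫ _ in Ico (m : ℝ) ((m : ℝ) + 1), (1 : ℝ) := by
      refine MeasureTheory.setIntegral_mono_on hf_int.integrableOn ?_ measurableSet_Ico
        (fun x _ => hf_le_one x)
      exact integrableOn_const (by rw [Real.volume_Ico]; exact ENNReal.ofReal_ne_top)
    rw [MeasureTheory.setIntegral_const, smul_eq_mul, measureReal_def, hvol _ _ (by linarith), mul_one] at h1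
    linarith
  have hcompl : Real.sqrt (π / a) - 1 ≤ ∫ x in (Ico (m : ℝ) ((m : ℝ) + 1))ᶜ, f x := by
    have h := MeasureTheory.integral_add_compl (measurableSet_Ico
      (a := (m : ℝ)) (b := (m : ℝ) + 1)) hf_int
    rw [hf_integral] at h
    linarith
  -- termwise lower bound
  have hterm_low : ∀ k : ℤ, (∫ x in t k, f x) ≤ f (k : ℝ) := by
    intro k
    rcases le_or_gt k m with hk | hk
    · have htk : t k = Ico ((k : ℝ) - 1) (k : ℝ) := by simp only [ht_def]; rw [if_pos hk]
      rw [htk]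
      have hkb : (k : ℝ) ≤ b := le_trans (by exact_mod_cast hk) hmb
      have h1 : ∫ x in Ico ((k : ℝ) - 1) (k : ℝ), f x
          ≤ ∫ _ in Ico ((k : ℝ) - 1) (k : ℝ), f (k : ℝ) := by
        refine MeasureTheory.setIntegral_mono_on hf_int.integrableOn ?_ measurableSet_Ico ?_
        · exact integrableOn_const
            (by rw [Real.volume_Ico]; exact ENNReal.ofReal_ne_top)
        · intro x hx
          exact hmono x _ hx.2.le hkb
      rwa [MeasureTheory.setIntegral_const, smul_eq_mul, measureReal_def, hvol _ _ (by linarith),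
        show (k : ℝ) - ((k : ℝ) - 1) = 1 by ring, one_mul] at h1
    · have htk : t k = Ico (k : ℝ) ((k : ℝ) + 1) := by
        simp only [ht_def, if_neg (by omega : ¬ k ≤ m)]
      rw [htk]
      have hbk : b ≤ (k : ℝ) := by
        have : (m : ℝ) + 1 ≤ (k : ℝ) := by exact_mod_cast (by omega : m + 1 ≤ k)
        linarith
      have h1 : ∫ x in Ico (k : ℝ) ((k : ℝ) + 1), f x
          ≤ ∫ _ in Ico (k : ℝ) ((k : ℝ) + 1), f (k : ℝ) := by
        refine MeasureTheory.setIntegral_mono_on hf_int.integrableOn ?_ measurableSet_Ico ?_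
        · exact integrableOn_const
            (by rw [Real.volume_Ico]; exact ENNReal.ofReal_ne_top)
        · intro x hx
          exact hanti _ x hbk hx.1
      rwa [MeasureTheory.setIntegral_const, smul_eq_mul, measureReal_def, hvol _ _ (by linarith),
        show (k : ℝ) + 1 - (k : ℝ) = 1 by ring, one_mul] at h1
  have hlow : Real.sqrt (π / a) - 1 ≤ ∑' k : ℤ, f (k : ℝ) := by
    calc Real.sqrt (π / a) - 1 ≤ ∫ x in (Ico (m : ℝ) ((m : ℝ) + 1))ᶜ, f x := hcompl
      _ = ∑' k : ℤ, ∫ x in t k, f x := ht_hasSum.tsum_eq.symm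
      _ ≤ ∑' k : ℤ, f (k : ℝ) := Summable.tsum_le_tsum hterm_low ht_hasSum.summable hF_summable
  exact ⟨hlow, hup⟩
end

section
/- Let a, b > 0 with √(4πa) > b > 0. Then [(√(4πa) - b)/(√(4πa) + b)]^d ≤ (Σ_{z∈ℤ^d} exp(-(b²/(4a))·(x/b - z)²)) / (Σ_{z∈ℤ^d} exp(-(b²/(4a))·z²)) ≤ [(√(4πa) + b)/(√(4πa) - b)]^d for every x ∈ ℝ^d. -/
open Real MeasureTheory Filter Topology

noncomputable def gaussS (t y : ℝ) : ℝ := ∑' z : ℤ, Real.exp (-t * (y - (z : ℝ)) ^ 2)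

lemma gauss_summable_nat (t y : ℝ) (ht : 0 < t) :
    Summable fun n : ℕ => Real.exp (-t * ((n : ℝ) - y) ^ 2) := by
  have hgeo : Summable fun n : ℕ => Real.exp (t * (y ^ 2 + |y| + 1)) * Real.exp (-t) ^ n :=
    (summable_geometric_of_lt_one (Real.exp_pos _).le
      (Real.exp_lt_one_iff.mpr (by linarith))).mul_left _
  refine Summable.of_nonneg_of_le (fun n => (Real.exp_pos _).le) (fun n => ?_) hgeo
  rw [← Real.exp_nat_mul, ← Real.exp_add, Real.exp_le_exp]
  have h1 : ((n : ℝ) - y) ^ 2 ≥ (n : ℝ) - (y ^ 2 + |y| + 1) := by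
    nlinarith [sq_nonneg ((n : ℝ) - y - 1 / 2), abs_nonneg y, le_abs_self y]
  nlinarith [ht.le]

lemma gauss_summable_int (t y : ℝ) (ht : 0 < t) :
    Summable fun z : ℤ => Real.exp (-t * (y - (z : ℝ)) ^ 2) := by
  apply Summable.of_nat_of_neg_add_one
  · refine (gauss_summable_nat t y ht).congr fun n => ?_
    push_cast; ring_nf
  · refine (gauss_summable_nat t (-(1 + y)) ht).congr fun n => ?_
    push_cast; ring_nf

lemma gaussS_add_int (t y : ℝ) (n : ℤ) : gaussS t (y + n) = gaussS t y := by
  unfold gaussS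
  rw [← (Equiv.addRight n).tsum_eq (fun z : ℤ => Real.exp (-t * (y + (n : ℝ) - (z : ℝ)) ^ 2))]
  refine tsum_congr fun z => ?_
  simp only [Equiv.coe_addRight]
  push_cast
  ring_nf

lemma gaussS_neg (t y : ℝ) : gaussS t (-y) = gaussS t y := by
  unfold gaussS
  rw [← (Equiv.neg ℤ).tsum_eq (fun z : ℤ => Real.exp (-t * (-y - (z : ℝ)) ^ 2))]
  refine tsum_congr fun z => ?_
  simp only [Equiv.neg_apply]
  push_cast
  ring_nf

lemma gaussS_core (t : ℝ) (ht : 0 < t) (y : ℝ) (hy0 : 0 ≤ y) (hy : y ≤ 1 / 2) :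
    Real.sqrt (π / t) - 1 ≤ gaussS t y ∧ gaussS t y ≤ Real.sqrt (π / t) + 1 := by
  set g : ℝ → ℝ := fun u => Real.exp (-t * (u - y) ^ 2) with hgdef
  set f : ℤ → ℝ := fun z => g (z : ℝ) with hfdef
  have hgint : Integrable g := (integrable_exp_neg_mul_sq ht).comp_sub_right y
  have hItot : (∫ u, g u) = Real.sqrt (π / t) := by
    rw [hgdef]
    rw [show (fun u : ℝ => Real.exp (-t * (u - y) ^ 2)) =
      (fun u : ℝ => (fun v : ℝ => Real.exp (-t * v ^ 2)) (u - y)) from rfl]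
    rw [integral_sub_right_eq_self (fun v : ℝ => Real.exp (-t * v ^ 2)) y]
    exact integral_gaussian t
  have hii : ∀ c d : ℝ, IntervalIntegrable g volume c d := fun c d => hgint.intervalIntegrable
  have h_le_int : ∀ c v : ℝ, (∀ u ∈ Set.Icc c (c + 1), v ≤ g u) → v ≤ ∫ u in c..(c + 1), g u := by
    intro c v h
    have h0 := intervalIntegral.integral_mono_on (by linarith : c ≤ c + 1)
      (intervalIntegrable_const (c := v)) (hii c (c + 1)) h
    simpa using h0
  have h_int_le : ∀ c v : ℝ, (∀ u ∈ Set.Icc c (c + 1), g u ≤ v) → (∫ u in c..(c + 1), g u) ≤ v := by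
    intro c v h
    have h0 := intervalIntegral.integral_mono_on (by linarith : c ≤ c + 1)
      (hii c (c + 1)) (intervalIntegrable_const (c := v)) h
    simpa using h0
  -- pointwise exp comparison
  have hexp : ∀ p q : ℝ, (q - y) ^ 2 ≤ (p - y) ^ 2 → g p ≤ g q := by
    intro p q h
    refine Real.exp_le_exp.mpr ?_
    nlinarith [ht.le]
  have claim1 : ∀ N : ℕ, (∑ z ∈ Finset.Icc (1 : ℤ) (N : ℤ), f z) ≤ ∫ u in (0 : ℝ)..(N : ℝ), g u := by
    intro N
    induction N with
    | zero => simp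
    | succ n ih =>
      have hsplit : Finset.Icc (1 : ℤ) ((n : ℤ) + 1) = insert ((n : ℤ) + 1) (Finset.Icc (1 : ℤ) (n : ℤ)) := by
        ext z; simp only [Finset.mem_Icc, Finset.mem_insert]; omega
      have hterm : f ((n : ℤ) + 1) ≤ ∫ u in ((n : ℝ))..((n : ℝ) + 1), g u := by
        refine h_le_int (n : ℝ) _ fun u hu => ?_
        refine hexp _ _ ?_
        have h1 : (0:ℝ) ≤ (n : ℝ) + 1 - u := by linarith [hu.2]
        have h2 : (0:ℝ) ≤ (n : ℝ) + 1 + u - 2 * y := by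
          have := hu.1; have : (0:ℝ) ≤ (n:ℝ) := Nat.cast_nonneg n; linarith [hu.1]
        have : f ((n : ℤ) + 1) = g ((n : ℝ) + 1) := by rw [hfdef]; push_cast; ring_nf
        push_cast
        nlinarith [mul_nonneg h1 h2]
      have hadj := intervalIntegral.integral_add_adjacent_intervals (hii 0 (n : ℝ)) (hii (n : ℝ) ((n : ℝ) + 1))
      push_cast [hsplit]
      rw [Finset.sum_insert (by simp)]
      have hcast : f ((n : ℤ) + 1) = g ((n : ℝ) + 1) := by rw [hfdef]; push_cast; ring_nf
      rw [← hadj]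
      push_cast at hterm ih ⊢
      linarith
  have claim2 : ∀ N : ℕ, (∑ z ∈ Finset.Icc (-(N : ℤ)) (-1 : ℤ), f z) ≤ ∫ u in (-(N : ℝ))..(0 : ℝ), g u := by
    intro N
    induction N with
    | zero => simp
    | succ n ih =>
      have hsplit : Finset.Icc (-((n : ℤ) + 1)) (-1 : ℤ)
          = insert (-(n : ℤ) - 1) (Finset.Icc (-(n : ℤ)) (-1 : ℤ)) := by
        ext z; simp only [Finset.mem_Icc, Finset.mem_insert]; omega
      have hterm : f (-(n : ℤ) - 1) ≤ ∫ u in (-(n : ℝ) - 1)..(-(n : ℝ) - 1 + 1), g u := by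
        refine h_le_int (-(n : ℝ) - 1) _ fun u hu => ?_
        refine hexp _ _ ?_
        have hn : (0:ℝ) ≤ (n:ℝ) := Nat.cast_nonneg n
        have h1 : (0:ℝ) ≤ u - (-(n : ℝ) - 1) := by linarith [hu.1]
        have h2 : (0:ℝ) ≤ 2 * y - u - (-(n : ℝ) - 1) := by linarith [hu.2]
        push_cast
        nlinarith [mul_nonneg h1 h2]
      have hadj := intervalIntegral.integral_add_adjacent_intervals
        (hii (-(n : ℝ) - 1) (-(n : ℝ))) (hii (-(n : ℝ)) 0)
      rw [show (-(n : ℝ) - 1 + 1) = -(n : ℝ) by ring] at hterm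
      push_cast [hsplit]
      rw [Finset.sum_insert (by simp)]
      rw [show (-((n : ℝ) + 1)) = -(n : ℝ) - 1 by ring, ← hadj]
      push_cast at hterm ih ⊢
      linarith
  have claim3 : ∀ N : ℕ, (∫ u in (1 : ℝ)..((N : ℝ) + 1), g u) ≤ ∑ z ∈ Finset.Icc (1 : ℤ) (N : ℤ), f z := by
    intro N
    induction N with
    | zero => simp
    | succ n ih =>
      have hsplit : Finset.Icc (1 : ℤ) ((n : ℤ) + 1) = insert ((n : ℤ) + 1) (Finset.Icc (1 : ℤ) (n : ℤ)) := by
        ext z; simp only [Finset.mem_Icc, Finset.mem_insert]; omega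
      have hterm : (∫ u in ((n : ℝ) + 1)..((n : ℝ) + 1 + 1), g u) ≤ f ((n : ℤ) + 1) := by
        refine h_int_le ((n : ℝ) + 1) _ fun u hu => ?_
        refine hexp _ _ ?_
        have hn : (0:ℝ) ≤ (n:ℝ) := Nat.cast_nonneg n
        have h1 : (0:ℝ) ≤ u - ((n : ℝ) + 1) := by linarith [hu.1]
        have h2 : (0:ℝ) ≤ u + ((n : ℝ) + 1) - 2 * y := by linarith [hu.1]
        push_cast
        nlinarith [mul_nonneg h1 h2]
      have hadj := intervalIntegral.integral_add_adjacent_intervals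
        (hii 1 ((n : ℝ) + 1)) (hii ((n : ℝ) + 1) ((n : ℝ) + 1 + 1))
      push_cast [hsplit]
      rw [Finset.sum_insert (by simp)]
      rw [show ((n : ℝ) + 1 + 1) = (n : ℝ) + 1 + 1 by ring, ← hadj]
      push_cast at hterm ih ⊢
      linarith
  have claim4 : ∀ N : ℕ, (∫ u in (-(N : ℝ) - 1)..(0 : ℝ), g u) ≤ ∑ z ∈ Finset.Icc (-(N : ℤ)) (0 : ℤ), f z := by
    intro N
    induction N with
    | zero =>
      simp only [Nat.cast_zero, neg_zero, Finset.Icc_self, Finset.sum_singleton, zero_sub]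
      have hterm : (∫ u in (-1 : ℝ)..(-1 + 1 : ℝ), g u) ≤ f 0 := by
        refine h_int_le (-1 : ℝ) _ fun u hu => ?_
        refine hexp _ _ ?_
        have h1 : (0:ℝ) ≤ -u := by linarith [hu.2]
        have h2 : (0:ℝ) ≤ 2 * y - u := by linarith [hu.2]
        push_cast
        nlinarith [mul_nonneg h1 h2]
      rw [show (-1 + 1 : ℝ) = 0 by ring] at hterm
      exact hterm
    | succ n ih =>
      have hsplit : Finset.Icc (-((n : ℤ) + 1)) (0 : ℤ)
          = insert (-(n : ℤ) - 1) (Finset.Icc (-(n : ℤ)) (0 : ℤ)) := by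
        ext z; simp only [Finset.mem_Icc, Finset.mem_insert]; omega
      have hterm : (∫ u in (-(n : ℝ) - 1 - 1)..(-(n : ℝ) - 1 - 1 + 1), g u) ≤ f (-(n : ℤ) - 1) := by
        refine h_int_le (-(n : ℝ) - 1 - 1) _ fun u hu => ?_
        refine hexp _ _ ?_
        have hn : (0:ℝ) ≤ (n:ℝ) := Nat.cast_nonneg n
        have h1 : (0:ℝ) ≤ (-(n : ℝ) - 1) - u := by linarith [hu.2]
        have h2 : (0:ℝ) ≤ 2 * y - u - (-(n : ℝ) - 1) := by linarith [hu.2]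
        push_cast
        nlinarith [mul_nonneg h1 h2]
      have hadj := intervalIntegral.integral_add_adjacent_intervals
        (hii (-(n : ℝ) - 1 - 1) (-(n : ℝ) - 1)) (hii (-(n : ℝ) - 1) 0)
      rw [show (-(n : ℝ) - 1 - 1 + 1) = -(n : ℝ) - 1 by ring] at hterm
      push_cast [hsplit]
      rw [Finset.sum_insert (by simp)]
      rw [show (-((n : ℝ) + 1) - 1) = -(n : ℝ) - 1 - 1 by ring, ← hadj]
      push_cast at hterm ih ⊢
      linarith
  have upperN : ∀ N : ℕ, (∑ z ∈ Finset.Icc (-(N : ℤ)) (N : ℤ), f z) ≤ Real.sqrt (π / t) + 1 := by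
    intro N
    have hsplit : Finset.Icc (-(N : ℤ)) (N : ℤ)
        = Finset.Icc (-(N : ℤ)) (-1 : ℤ) ∪ Finset.Icc (0 : ℤ) (N : ℤ) := by
      ext z; simp only [Finset.mem_Icc, Finset.mem_union]; omega
    have hdisj : Disjoint (Finset.Icc (-(N : ℤ)) (-1 : ℤ)) (Finset.Icc (0 : ℤ) (N : ℤ)) := by
      rw [Finset.disjoint_left]
      intro z hz hz'
      simp only [Finset.mem_Icc] at hz hz'
      omega
    have hsplit2 : Finset.Icc (0 : ℤ) (N : ℤ) = insert (0 : ℤ) (Finset.Icc (1 : ℤ) (N : ℤ)) := by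
      ext z; simp only [Finset.mem_Icc, Finset.mem_insert]; omega
    rw [hsplit, Finset.sum_union hdisj, hsplit2, Finset.sum_insert (by simp)]
    have hf0 : f 0 ≤ 1 := by
      rw [hfdef]
      refine Real.exp_le_one_iff.mpr ?_
      push_cast
      nlinarith [sq_nonneg (0 - y)]
    have hadj := intervalIntegral.integral_add_adjacent_intervals (hii (-(N : ℝ)) 0) (hii 0 (N : ℝ))
    have hIN : (∫ u in (-(N : ℝ))..(N : ℝ), g u) ≤ Real.sqrt (π / t) := by
      rw [intervalIntegral.integral_of_le (by linarith [Nat.cast_nonneg (α := ℝ) N] : -(N:ℝ) ≤ (N:ℝ))]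
      rw [← hItot]
      exact setIntegral_le_integral hgint (Eventually.of_forall fun u => (Real.exp_pos _).le)
    linarith [claim1 N, claim2 N]
  have lowerN : ∀ N : ℕ,
      (∫ u in (-(N : ℝ) - 1)..((N : ℝ) + 1), g u) - 1 ≤ ∑ z ∈ Finset.Icc (-(N : ℤ)) (N : ℤ), f z := by
    intro N
    have hsplit : Finset.Icc (-(N : ℤ)) (N : ℤ)
        = Finset.Icc (-(N : ℤ)) (0 : ℤ) ∪ Finset.Icc (1 : ℤ) (N : ℤ) := by
      ext z; simp only [Finset.mem_Icc, Finset.mem_union]; omega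
    have hdisj : Disjoint (Finset.Icc (-(N : ℤ)) (0 : ℤ)) (Finset.Icc (1 : ℤ) (N : ℤ)) := by
      rw [Finset.disjoint_left]
      intro z hz hz'
      simp only [Finset.mem_Icc] at hz hz'
      omega
    rw [hsplit, Finset.sum_union hdisj]
    have h01 : (∫ u in (0 : ℝ)..(0 + 1 : ℝ), g u) ≤ 1 := by
      refine h_int_le 0 1 fun u hu => ?_
      refine Real.exp_le_one_iff.mpr ?_
      nlinarith [sq_nonneg (u - y)]
    rw [show ((0:ℝ) + 1) = 1 by ring] at h01
    have hN0 : (0:ℝ) ≤ (N : ℝ) := Nat.cast_nonneg N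
    have hadj1 := intervalIntegral.integral_add_adjacent_intervals (hii (-(N : ℝ) - 1) 0) (hii 0 1)
    have hadj2 := intervalIntegral.integral_add_adjacent_intervals (hii (-(N : ℝ) - 1) 1) (hii 1 ((N : ℝ) + 1))
    linarith [claim3 N, claim4 N]
  have hSval : gaussS t y = ∑' z : ℤ, f z := by
    refine tsum_congr fun z => ?_
    rw [hfdef, hgdef]
    ring_nf
  have hsummf : Summable f := by
    refine (gauss_summable_int t y ht).congr fun z => ?_
    rw [hfdef, hgdef]
    ring_nf
  have hhs : HasSum f (gaussS t y) := hSval ▸ hsummf.hasSum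
  have hIccTop : Tendsto (fun N : ℕ => Finset.Icc (-(N : ℤ)) (N : ℤ)) atTop atTop := by
    refine tendsto_atTop_finset_of_monotone ?_ ?_
    · intro m n hmn
      refine Finset.Icc_subset_Icc ?_ ?_ <;> omega
    · intro z
      exact ⟨z.natAbs, by simp only [Finset.mem_Icc]; omega⟩
  have htends : Tendsto (fun N : ℕ => ∑ z ∈ Finset.Icc (-(N : ℤ)) (N : ℤ), f z) atTop (𝓝 (gaussS t y)) :=
    hhs.comp hIccTop
  have hA : Tendsto (fun N : ℕ => -(N : ℝ) - 1) atTop atBot := by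
    have h1 : Tendsto (fun N : ℕ => (N : ℝ) + 1) atTop atTop :=
      tendsto_atTop_add_const_right _ 1 tendsto_natCast_atTop_atTop
    have h2 := tendsto_neg_atTop_atBot.comp h1
    refine h2.congr fun N => ?_
    simp [Function.comp]
    ring
  have hB : Tendsto (fun N : ℕ => (N : ℝ) + 1) atTop atTop :=
    tendsto_atTop_add_const_right _ 1 tendsto_natCast_atTop_atTop
  have hQ : Tendsto (fun N : ℕ => (∫ u in (-(N : ℝ) - 1)..((N : ℝ) + 1), g u) - 1) atTop
      (𝓝 (Real.sqrt (π / t) - 1)) := by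
    have := (intervalIntegral_tendsto_integral hgint hA hB).sub_const 1
    rwa [hItot] at this
  constructor
  · exact le_of_tendsto_of_tendsto' hQ htends lowerN
  · exact le_of_tendsto htends (Eventually.of_forall upperN)

lemma gaussS_bounds (t : ℝ) (ht : 0 < t) (y : ℝ) :
    Real.sqrt (π / t) - 1 ≤ gaussS t y ∧ gaussS t y ≤ Real.sqrt (π / t) + 1 := by
  have hfr : gaussS t y = gaussS t (Int.fract y) := by
    conv_lhs => rw [← Int.fract_add_floor y]
    rw [gaussS_add_int]
  rcases le_or_gt (Int.fract y) (1 / 2) with h | h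
  · rw [hfr]; exact gaussS_core t ht _ (Int.fract_nonneg y) h
  · have h2 : gaussS t (Int.fract y) = gaussS t (1 - Int.fract y) := by
      rw [← gaussS_neg t (1 - Int.fract y),
        show -(1 - Int.fract y) = Int.fract y + ((-1 : ℤ) : ℝ) by push_cast; ring,
        gaussS_add_int]
    rw [hfr, h2]
    exact gaussS_core t ht _ (by linarith [Int.fract_lt_one y]) (by linarith)

lemma hasSum_pi_prod {d : ℕ} (f : Fin d → ℤ → ℝ) (L : Fin d → ℝ)
    (hpos : ∀ i z, 0 ≤ f i z) (hf : ∀ i, HasSum (f i) (L i)) :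
    HasSum (fun z : Fin d → ℤ => ∏ i, f i (z i)) (∏ i, L i) := by
  induction d with
  | zero =>
    simp only [Finset.univ_eq_empty, Finset.prod_empty]
    exact hasSum_single (default : Fin 0 → ℤ) fun b' hb' =>
      absurd (Subsingleton.elim b' default) hb'
  | succ n ih =>
    have h2 := ih (fun i => f i.succ) (fun i => L i.succ) (fun i z => hpos i.succ z)
      (fun i => hf i.succ)
    have h1n : Summable fun z : ℤ => ‖f 0 z‖ :=
      (hf 0).summable.congr fun z => (Real.norm_of_nonneg (hpos 0 z)).symm
    have h2n : Summable fun w : Fin n → ℤ => ‖∏ i, f i.succ (w i)‖ :=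
      h2.summable.congr fun w =>
        (Real.norm_of_nonneg (Finset.prod_nonneg fun i _ => hpos i.succ (w i))).symm
    have hsummul := summable_mul_of_summable_norm h1n h2n
    have hmul := (hf 0).mul h2 hsummul
    rw [Fin.prod_univ_succ]
    refine (Equiv.hasSum_iff (Fin.consEquiv (fun _ : Fin (n + 1) => ℤ))).mp ?_
    have hfun : ((fun z : Fin (n + 1) → ℤ => ∏ i, f i (z i)) ∘
        (Fin.consEquiv (fun _ : Fin (n + 1) => ℤ))) =
        fun p : ℤ × (Fin n → ℤ) => f 0 p.1 * ∏ i, f i.succ (p.2 i) := by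
      funext p
      simp [Fin.consEquiv, Fin.prod_univ_succ]
    rw [hfun]
    exact hmul

lemma hasSum_gauss_pi (d : ℕ) (t : ℝ) (ht : 0 < t) (y : Fin d → ℝ) :
    HasSum (fun z : Fin d → ℤ => Real.exp (-t * ∑ i, (y i - (z i : ℝ)) ^ 2))
      (∏ i, gaussS t (y i)) := by
  have h := hasSum_pi_prod (fun i z => Real.exp (-t * (y i - (z : ℝ)) ^ 2))
    (fun i => gaussS t (y i)) (fun i z => (Real.exp_pos _).le)
    (fun i => (gauss_summable_int t (y i) ht).hasSum)
  have hfun : (fun z : Fin d → ℤ => ∏ i, Real.exp (-t * (y i - (z i : ℝ)) ^ 2)) =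
      fun z : Fin d → ℤ => Real.exp (-t * ∑ i, (y i - (z i : ℝ)) ^ 2) := by
    funext z
    rw [Finset.mul_sum, Real.exp_sum]
  rwa [hfun] at h

theorem gaussian_lattice_ratio_bounds (d : ℕ) (hd : 1 ≤ d) (a b : ℝ)
    (ha : 0 < a) (hb : 0 < b) (hab : b < Real.sqrt (4 * π * a))
    (x : Fin d → ℝ) :
    ((Real.sqrt (4 * π * a) - b) / (Real.sqrt (4 * π * a) + b)) ^ d ≤
      (∑' z : Fin d → ℤ,
          Real.exp (-(b ^ 2 / (4 * a)) * ∑ i, (x i / b - (z i : ℝ)) ^ 2)) /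
      (∑' z : Fin d → ℤ,
          Real.exp (-(b ^ 2 / (4 * a)) * ∑ i, ((z i : ℝ)) ^ 2)) ∧
    (∑' z : Fin d → ℤ,
        Real.exp (-(b ^ 2 / (4 * a)) * ∑ i, (x i / b - (z i : ℝ)) ^ 2)) /
      (∑' z : Fin d → ℤ,
        Real.exp (-(b ^ 2 / (4 * a)) * ∑ i, ((z i : ℝ)) ^ 2)) ≤
      ((Real.sqrt (4 * π * a) + b) / (Real.sqrt (4 * π * a) - b)) ^ d := by
  have hπ := Real.pi_pos
  set s := Real.sqrt (4 * π * a) with hs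
  have hs_pos : 0 < s := lt_trans hb hab
  set t : ℝ := b ^ 2 / (4 * a) with htdef
  have ht : 0 < t := by positivity
  have hIeq : Real.sqrt (π / t) = s / b := by
    rw [htdef, hs, show π / (b ^ 2 / (4 * a)) = (4 * π * a) / b ^ 2 by
      field_simp]
    rw [Real.sqrt_div (by positivity) (b ^ 2), Real.sqrt_sq hb.le]
  have hI1 : 1 < Real.sqrt (π / t) := by
    rw [hIeq, lt_div_iff₀ hb, one_mul]
    exact hab
  obtain ⟨hS0l, hS0u⟩ := gaussS_bounds t ht 0
  have hS0pos : 0 < gaussS t 0 := by linarith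
  have hnum := hasSum_gauss_pi d t ht (fun i => x i / b)
  have hden := hasSum_gauss_pi d t ht (fun _ => 0)
  have hnum_eq : (∑' z : Fin d → ℤ,
      Real.exp (-t * ∑ i, (x i / b - (z i : ℝ)) ^ 2)) = ∏ i, gaussS t (x i / b) :=
    hnum.tsum_eq
  have hden_eq : (∑' z : Fin d → ℤ,
      Real.exp (-t * ∑ i, ((z i : ℝ)) ^ 2)) = ∏ _i : Fin d, gaussS t 0 := by
    rw [← hden.tsum_eq]
    refine tsum_congr fun z => ?_
    norm_num
  rw [hnum_eq, hden_eq]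
  have hprod_eq : (∏ i, gaussS t (x i / b)) / (∏ _i : Fin d, gaussS t 0)
      = ∏ i : Fin d, (gaussS t (x i / b) / gaussS t 0) := by
    rw [Finset.prod_div_distrib]
  have e1 : (s - b) / (s + b) = (Real.sqrt (π / t) - 1) / (Real.sqrt (π / t) + 1) := by
    rw [hIeq, div_eq_div_iff (by positivity) (by positivity)]
    field_simp
  have hsb : s - b ≠ 0 := ne_of_gt (by linarith : (0:ℝ) < s - b)
  have hI1' : Real.sqrt (π / t) - 1 ≠ 0 := ne_of_gt (by linarith : (0:ℝ) < Real.sqrt (π / t) - 1)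
  have e2 : (s + b) / (s - b) = (Real.sqrt (π / t) + 1) / (Real.sqrt (π / t) - 1) := by
    rw [hIeq] at hI1' ⊢
    rw [div_eq_div_iff hsb hI1']
    field_simp
  have hlo : ∀ i : Fin d, (s - b) / (s + b) ≤ gaussS t (x i / b) / gaussS t 0 := by
    intro i
    obtain ⟨hl, hu⟩ := gaussS_bounds t ht (x i / b)
    rw [e1]
    exact div_le_div₀ (by linarith) hl hS0pos hS0u
  have hhi : ∀ i : Fin d, gaussS t (x i / b) / gaussS t 0 ≤ (s + b) / (s - b) := by
    intro i
    obtain ⟨hl, hu⟩ := gaussS_bounds t ht (x i / b)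
    rw [e2]
    exact div_le_div₀ (by linarith) hu (by linarith) hS0l
  have hpc : ∀ c : ℝ, (∏ _i : Fin d, c) = c ^ d := fun c => by
    simp [Finset.prod_const]
  constructor
  · rw [hprod_eq, ← hpc]
    refine Finset.prod_le_prod (fun i _ => ?_) (fun i _ => hlo i)
    have : 0 ≤ s - b := by linarith
    positivity
  · rw [hprod_eq, ← hpc]
    refine Finset.prod_le_prod (fun i _ => ?_) (fun i _ => hhi i)
    obtain ⟨hl, hu⟩ := gaussS_bounds t ht (x i / b)
    exact div_nonneg (by linarith) hS0pos.le
end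

section
/- Let β > 0, μ < 0, and d ≥ 1. Suppose for each L > 0 and n ≥ 1 a density ϱ_L(n) ≥ 0 satisfies ϱ_L(n) ≤ e^{βμn}(4πnβ)^{-d/2} Σ_{z∈ℤ^d} exp(-L²z²/(4nβ)), and suppose ϱ_L(n) → ϱ(n) as L→∞ for each n, and Σ_{n≥1} ϱ_L(n) = ρ_L → ρ. Then Σ_{n≥1} ϱ(n) = ρ; i.e., the density of particles in infinite cycles ρ - Σ_{n≥1} ϱ(n) is zero. -/
open Real Filter
open scoped ENNReal

lemma pi_tsum_pow (g : ℤ → ℝ≥0∞) : ∀ d : ℕ,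
    ∑' z : Fin d → ℤ, ∏ i, g (z i) = (∑' k : ℤ, g k) ^ d := by
  intro d
  induction d with
  | zero =>
    have : (∑' _z : Fin 0 → ℤ, (1 : ℝ≥0∞)) = 1 := tsum_eq_single default (by
      intro b hb; exact absurd (Subsingleton.elim b default) hb)
    simpa using this
  | succ d ih =>
    rw [← (Fin.consEquiv (fun _ : Fin (d+1) => ℤ)).tsum_eq
      (fun z : Fin (d+1) → ℤ => ∏ i, g (z i)), ENNReal.tsum_prod']
    have key : ∀ (x : ℤ) (p : Fin d → ℤ),
        (∏ i, g ((Fin.consEquiv (fun _ : Fin (d+1) => ℤ)) (x, p) i))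
          = g x * ∏ i, g (p i) := by
      intro x p
      simp [Fin.consEquiv, Fin.prod_univ_succ]
    calc ∑' (x : ℤ) (p : Fin d → ℤ),
          (∏ i, g ((Fin.consEquiv (fun _ : Fin (d+1) => ℤ)) (x, p) i))
        = ∑' (x : ℤ), ∑' (p : Fin d → ℤ), g x * ∏ i, g (p i) := by
          congr 1; funext x; congr 1; funext p; exact key x p
      _ = ∑' (x : ℤ), g x * ∑' (p : Fin d → ℤ), ∏ i, g (p i) := by
          congr 1; funext x; exact ENNReal.tsum_mul_left
      _ = (∑' k : ℤ, g k) ^ (d + 1) := by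
          rw [ih, ENNReal.tsum_mul_right, pow_succ, mul_comm]

lemma one_sub_exp_inv_le (a : ℝ) (ha : 0 < a) :
    (1 - Real.exp (-a))⁻¹ ≤ 1 + 1 / a := by
  have hlt : Real.exp (-a) < 1 := by
    rw [show (1:ℝ) = Real.exp 0 by simp]
    exact Real.exp_lt_exp.mpr (by linarith)
  have hpos : (0:ℝ) < 1 - Real.exp (-a) := by linarith
  have hea : (0:ℝ) < Real.exp a := Real.exp_pos a
  have ht : Real.exp (-a) * (a + 1) ≤ 1 := by
    rw [Real.exp_neg, inv_mul_le_iff₀ hea, mul_one]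
    exact Real.add_one_le_exp a
  rw [inv_eq_one_div, div_le_iff₀ hpos]
  have hinv : a * (1 / a) = 1 := by field_simp
  nlinarith [ht, ha, hpos, mul_pos ha hpos]

lemma gauss_bound (a : ℝ) (ha : 0 < a) :
    ∑' k : ℤ, ENNReal.ofReal (Real.exp (-(a * (k : ℝ) ^ 2)))
      ≤ ENNReal.ofReal (2 * (1 + 1 / a)) := by
  have hlt : Real.exp (-a) < 1 := by
    rw [show (1:ℝ) = Real.exp 0 by simp]
    exact Real.exp_lt_exp.mpr (by linarith)
  have hpos : (0:ℝ) < 1 - Real.exp (-a) := by linarith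
  rw [← tsum_nat_add_neg_add_one ENNReal.summable]
  have hterm : ∀ n : ℕ,
      ENNReal.ofReal (Real.exp (-(a * ((n:ℤ) : ℝ) ^ 2)))
        + ENNReal.ofReal (Real.exp (-(a * ((-((n:ℤ) + 1) : ℤ) : ℝ) ^ 2)))
      ≤ ENNReal.ofReal 2 * ENNReal.ofReal (Real.exp (-a)) ^ n := by
    intro n
    have hnsq : (n : ℝ) ≤ (n : ℝ) ^ 2 := by
      have := Nat.le_self_pow (two_ne_zero) n
      exact_mod_cast this
    have h1 : Real.exp (-(a * ((n:ℤ) : ℝ) ^ 2)) ≤ Real.exp (-a) ^ n := by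
      rw [← Real.exp_nat_mul]
      apply Real.exp_le_exp.mpr
      push_cast
      nlinarith
    have h2 : Real.exp (-(a * ((-((n:ℤ) + 1) : ℤ) : ℝ) ^ 2)) ≤ Real.exp (-a) ^ n := by
      rw [← Real.exp_nat_mul]
      apply Real.exp_le_exp.mpr
      have h : ((-((n:ℤ) + 1) : ℤ) : ℝ) ^ 2 = ((n:ℝ) + 1) ^ 2 := by push_cast; ring
      rw [h]
      have hle : (n : ℝ) ≤ ((n:ℝ) + 1) ^ 2 := by nlinarith [Nat.cast_nonneg (α := ℝ) n]
      nlinarith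
    have h2' : ENNReal.ofReal 2 * ENNReal.ofReal (Real.exp (-a)) ^ n
        = ENNReal.ofReal (Real.exp (-a) ^ n) + ENNReal.ofReal (Real.exp (-a) ^ n) := by
      rw [← ENNReal.ofReal_pow (Real.exp_nonneg _)]
      rw [show ENNReal.ofReal 2 = 2 from by
        rw [show (2:ℝ) = ((2:ℕ):ℝ) by norm_num, ENNReal.ofReal_natCast]; norm_num]
      rw [two_mul]
    rw [h2']
    exact add_le_add (ENNReal.ofReal_le_ofReal h1) (ENNReal.ofReal_le_ofReal h2)
  calc ∑' n : ℕ, (ENNReal.ofReal (Real.exp (-(a * ((n:ℤ) : ℝ) ^ 2)))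
          + ENNReal.ofReal (Real.exp (-(a * ((-((n:ℤ) + 1) : ℤ) : ℝ) ^ 2))))
      ≤ ∑' n : ℕ, ENNReal.ofReal 2 * ENNReal.ofReal (Real.exp (-a)) ^ n :=
        ENNReal.tsum_le_tsum hterm
    _ = ENNReal.ofReal 2 * (1 - ENNReal.ofReal (Real.exp (-a)))⁻¹ := by
        rw [ENNReal.tsum_mul_left, ENNReal.tsum_geometric]
    _ ≤ ENNReal.ofReal (2 * (1 + 1 / a)) := by
        have e1 : (1 : ℝ≥0∞) - ENNReal.ofReal (Real.exp (-a))
            = ENNReal.ofReal (1 - Real.exp (-a)) := by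
          rw [ENNReal.ofReal_sub _ (Real.exp_nonneg _), ENNReal.ofReal_one]
        rw [e1, ← ENNReal.ofReal_inv_of_pos hpos,
          ← ENNReal.ofReal_mul (by norm_num)]
        exact ENNReal.ofReal_le_ofReal (by
          have := one_sub_exp_inv_le a ha
          linarith)

lemma multi_bound (d : ℕ) (β L : ℝ) (hβ : 0 < β) (hL : 1 ≤ L) (n : ℕ) (hn : 1 ≤ n) :
    ∑' z : Fin d → ℤ, Real.exp (-(L ^ 2 * ∑ i, ((z i : ℝ)) ^ 2) / (4 * n * β))
      ≤ ((2 + 16 * β) * n) ^ d := by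
  have hn' : (0:ℝ) < n := by exact_mod_cast hn
  have hL0 : (0:ℝ) < L := lt_of_lt_of_le one_pos hL
  set a : ℝ := L ^ 2 / (4 * n * β) with ha_def
  have ha : 0 < a := by positivity
  set F : (Fin d → ℤ) → ℝ :=
    fun z => Real.exp (-(L ^ 2 * ∑ i, ((z i : ℝ)) ^ 2) / (4 * n * β)) with hF
  have hFnn : ∀ z, 0 ≤ F z := fun z => Real.exp_nonneg _
  have hfac : ∀ z : Fin d → ℤ,
      ENNReal.ofReal (F z) = ∏ i, ENNReal.ofReal (Real.exp (-(a * ((z i : ℝ)) ^ 2))) := by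
    intro z
    have hexp : -(L ^ 2 * ∑ i, ((z i : ℝ)) ^ 2) / (4 * n * β)
        = ∑ i, -(a * ((z i : ℝ)) ^ 2) := by
      have h4 : (4 * (n:ℝ) * β) ≠ 0 := by positivity
      calc -(L ^ 2 * ∑ i, ((z i : ℝ)) ^ 2) / (4 * n * β)
          = -(a * ∑ i, ((z i : ℝ)) ^ 2) := by rw [ha_def]; field_simp
        _ = ∑ i, -(a * ((z i : ℝ)) ^ 2) := by
            rw [Finset.mul_sum, ← Finset.sum_neg_distrib]
    have hFz : F z = ∏ i, Real.exp (-(a * ((z i : ℝ)) ^ 2)) := by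
      have : F z = Real.exp (∑ i, -(a * ((z i : ℝ)) ^ 2)) := congrArg Real.exp hexp
      rw [this, Real.exp_sum]
    rw [hFz, ENNReal.ofReal_prod_of_nonneg (fun i _ => Real.exp_nonneg _)]
  have hRnn : (0:ℝ) ≤ 2 * (1 + 1 / a) := by positivity
  have hbound1 : 2 * (1 + 1 / a) ≤ (2 + 16 * β) * n := by
    have h1 : 1 / a = 4 * n * β / L ^ 2 := by
      rw [ha_def, one_div, inv_div]
    have hL2 : (1:ℝ) ≤ L ^ 2 := by nlinarith
    have h2 : 4 * (n:ℝ) * β / L ^ 2 ≤ 4 * n * β := by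
      rw [div_le_iff₀ (by positivity)]
      nlinarith [mul_pos (mul_pos (by norm_num : (0:ℝ) < 4) hn') hβ]
    rw [h1]
    have hn1 : (1:ℝ) ≤ n := by exact_mod_cast hn
    nlinarith
  have henn : ∑' z : Fin d → ℤ, ENNReal.ofReal (F z)
      ≤ ENNReal.ofReal (((2 + 16 * β) * n) ^ d) := by
    calc ∑' z : Fin d → ℤ, ENNReal.ofReal (F z)
        = ∑' z : Fin d → ℤ, ∏ i, ENNReal.ofReal (Real.exp (-(a * ((z i : ℝ)) ^ 2))) :=
          tsum_congr hfac
      _ = (∑' k : ℤ, ENNReal.ofReal (Real.exp (-(a * (k : ℝ) ^ 2)))) ^ d :=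
          pi_tsum_pow (fun k : ℤ => ENNReal.ofReal (Real.exp (-(a * (k : ℝ) ^ 2)))) d
      _ ≤ ENNReal.ofReal (2 * (1 + 1 / a)) ^ d := by
          exact pow_le_pow_left' (gauss_bound a ha) d
      _ ≤ ENNReal.ofReal (((2 + 16 * β) * n) ^ d) := by
          rw [← ENNReal.ofReal_pow hRnn]
          exact ENNReal.ofReal_le_ofReal (pow_le_pow_left₀ hRnn hbound1 d)
  have hne : ∀ z : Fin d → ℤ, ENNReal.ofReal (F z) ≠ ⊤ := fun z => ENNReal.ofReal_ne_top
  have heq : ∑' z : Fin d → ℤ, F z = (∑' z : Fin d → ℤ, ENNReal.ofReal (F z)).toReal := by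
    rw [ENNReal.tsum_toReal_eq hne]
    exact (tsum_congr fun z => (ENNReal.toReal_ofReal (hFnn z)).symm)
  rw [heq]
  calc (∑' z : Fin d → ℤ, ENNReal.ofReal (F z)).toReal
      ≤ (ENNReal.ofReal (((2 + 16 * β) * n) ^ d)).toReal :=
        ENNReal.toReal_mono ENNReal.ofReal_ne_top henn
    _ = ((2 + 16 * β) * n) ^ d := ENNReal.toReal_ofReal (by positivity)

theorem no_infinite_cycles_negative_mu (d : ℕ) (hd : 1 ≤ d)
    (β μ : ℝ) (hβ : 0 < β) (hμ : μ < 0)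
    (ϱL : ℝ → ℕ → ℝ) (ϱ : ℕ → ℝ) (ρL : ℝ → ℝ) (ρ : ℝ)
    (hnonneg : ∀ L, ∀ n, 1 ≤ n → 0 ≤ ϱL L n)
    (hbound : ∀ L, 0 < L → ∀ n, 1 ≤ n →
      ϱL L n ≤ Real.exp (β * μ * n) * (4 * π * n * β) ^ (-(d : ℝ) / 2) *
        ∑' z : Fin d → ℤ, Real.exp (-(L ^ 2 * ∑ i, ((z i : ℝ)) ^ 2) / (4 * n * β)))
    (hlim : ∀ n, 1 ≤ n → Tendsto (fun L => ϱL L n) atTop (nhds (ϱ n)))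
    (hsum : ∀ L, HasSum (fun n : ℕ => ϱL L (n + 1)) (ρL L))
    (hρ : Tendsto ρL atTop (nhds ρ)) :
    ∑' n : ℕ, ϱ (n + 1) = ρ := by
  have hπ : (0:ℝ) < π := Real.pi_pos
  set r : ℝ := Real.exp (β * μ) with hr_def
  have hr0 : 0 < r := Real.exp_pos _
  have hr1 : r < 1 := by
    rw [hr_def, show (1:ℝ) = Real.exp 0 by simp]
    exact Real.exp_lt_exp.mpr (by nlinarith)
  set C : ℝ := (4 * π * β) ^ (-(d : ℝ) / 2) * (2 + 16 * β) ^ d with hC_def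
  have hC0 : 0 ≤ C := by
    apply mul_nonneg
    · exact Real.rpow_nonneg (by positivity) _
    · positivity
  set bound : ℕ → ℝ := fun k => C * (((k:ℝ) + 1) ^ d * r ^ (k + 1)) with hbound_def
  have hsummable : Summable bound := by
    apply Summable.mul_left
    have h0 : Summable (fun n : ℕ => (n:ℝ) ^ d * r ^ n) := by
      simpa using summable_pow_mul_geometric_of_norm_lt_one d
        (r := r) (by rw [Real.norm_eq_abs, abs_of_pos hr0]; exact hr1)
    have := (summable_nat_add_iff 1).mpr h0
    simpa [add_comm] using this
  -- key pointwise bound for L ≥ 1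
  have hkey : ∀ L : ℝ, 1 ≤ L → ∀ k : ℕ, ‖ϱL L (k + 1)‖ ≤ bound k := by
    intro L hL k
    have hL0 : (0:ℝ) < L := lt_of_lt_of_le one_pos hL
    have hk1 : 1 ≤ k + 1 := Nat.le_add_left 1 k
    rw [Real.norm_eq_abs, abs_of_nonneg (hnonneg L (k+1) hk1)]
    have h1 := hbound L hL0 (k+1) hk1
    have h2 := multi_bound d β L hβ hL (k+1) hk1
    have hn' : (0:ℝ) < ((k+1 : ℕ) : ℝ) := by positivity
    -- prefactor bound
    have hpre : ((4 * π * ((k+1 : ℕ) : ℝ) * β) : ℝ) ^ (-(d : ℝ) / 2)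
        ≤ (4 * π * β) ^ (-(d : ℝ) / 2) := by
      apply Real.rpow_le_rpow_of_nonpos (by positivity)
      · have h1 : (1:ℝ) ≤ ((k+1 : ℕ) : ℝ) := by exact_mod_cast hk1
        have h2 : 4*π*β*1 ≤ 4*π*β*((k+1 : ℕ) : ℝ) :=
          mul_le_mul_of_nonneg_left h1 (by positivity)
        nlinarith [h2]
      · have : (0:ℝ) ≤ (d:ℝ) := Nat.cast_nonneg d
        linarith
    have hexp : Real.exp (β * μ * ((k+1 : ℕ) : ℝ)) = r ^ (k+1) := by
      rw [hr_def, ← Real.exp_nat_mul]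
      congr 1
      push_cast; ring
    have hS0 : (0:ℝ) ≤ ∑' z : Fin d → ℤ,
        Real.exp (-(L ^ 2 * ∑ i, ((z i : ℝ)) ^ 2) / (4 * ((k+1 : ℕ) : ℝ) * β)) :=
      tsum_nonneg fun z => Real.exp_nonneg _
    calc ϱL L (k+1)
        ≤ Real.exp (β * μ * ((k+1 : ℕ) : ℝ)) *
            ((4 * π * ((k+1 : ℕ) : ℝ) * β) : ℝ) ^ (-(d : ℝ) / 2) *
          ∑' z : Fin d → ℤ,
            Real.exp (-(L ^ 2 * ∑ i, ((z i : ℝ)) ^ 2) / (4 * ((k+1 : ℕ) : ℝ) * β)) := h1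
      _ ≤ Real.exp (β * μ * ((k+1 : ℕ) : ℝ)) * (4 * π * β) ^ (-(d : ℝ) / 2) *
            (((2 + 16 * β) * ((k+1 : ℕ) : ℝ)) ^ d) := by
          apply mul_le_mul
          · exact mul_le_mul_of_nonneg_left hpre (Real.exp_nonneg _)
          · exact h2
          · exact hS0
          · positivity
      _ = bound k := by
          rw [hbound_def, hexp, hC_def]
          push_cast
          rw [mul_pow]
          ring
  have hmain : Tendsto (fun L => ∑' k : ℕ, ϱL L (k + 1)) atTop
      (nhds (∑' k : ℕ, ϱ (k + 1))) := by
    apply tendsto_tsum_of_dominated_convergence hsummable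
    · intro k; exact hlim (k+1) (Nat.le_add_left 1 k)
    · filter_upwards [eventually_ge_atTop (1:ℝ)] with L hL
      exact hkey L hL
  have heq : (fun L => ∑' k : ℕ, ϱL L (k + 1)) = ρL := by
    funext L; exact (hsum L).tsum_eq
  rw [heq] at hmain
  exact tendsto_nhds_unique hmain hρ
end

section
/- In the canonical ideal Bose gas (occupation numbers (n_k) with Σ_k n_k = N, probability ∝ exp(-β Σ_k n_k k²)), the expected occupation of any nonzero mode k satisfies ⟨n_k⟩ ≤ 1/(e^{βk²} - 1) ≤ 1/(βk²). -/
open Real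

/-- Energy of an occupation-number configuration `f` (finitely many nonzero
occupation numbers on the dual lattice `(2π/L)ℤ^d`). -/
noncomputable def canonicalEnergy (d : ℕ) (L : ℝ) (f : (Fin d → ℤ) →₀ ℕ) : ℝ :=
  f.sum fun k n => (n : ℝ) * ∑ i, ((2 * π / L) * (k i : ℝ)) ^ 2

/-- Canonical partition function with `M` particles. -/
noncomputable def canonicalY (d : ℕ) (L β : ℝ) (M : ℕ) : ℝ :=
  ∑' f : {f : (Fin d → ℤ) →₀ ℕ // f.sum (fun _ n => n) = M},
    Real.exp (-β * canonicalEnergy d L f)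

section aux

variable (d : ℕ) (L : ℝ)

lemma energy_add (a b : (Fin d → ℤ) →₀ ℕ) :
    canonicalEnergy d L (a + b) = canonicalEnergy d L a + canonicalEnergy d L b := by
  unfold canonicalEnergy
  exact Finsupp.sum_add_index' (fun a => by simp) (fun a b₁ b₂ => by push_cast; ring)

lemma numsum_add (a b : (Fin d → ℤ) →₀ ℕ) :
    (a + b).sum (fun _ n => n) = a.sum (fun _ n => n) + b.sum (fun _ n => n) :=
  Finsupp.sum_add_index' (fun _ => rfl) (fun _ _ _ => rfl)

lemma energy_single (k : Fin d → ℤ) (n : ℕ) :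
    canonicalEnergy d L (Finsupp.single k n) = n * ∑ i, ((2 * π / L) * (k i : ℝ)) ^ 2 := by
  unfold canonicalEnergy
  exact Finsupp.sum_single_index (by simp)

lemma energy_zero_mode (n : ℕ) : canonicalEnergy d L (Finsupp.single 0 n) = 0 := by
  rw [energy_single]
  simp

end aux

theorem occupation_number_bound (d : ℕ) (L β : ℝ) (hL : 0 < L) (hβ : 0 < β)
    (N : ℕ) (k : Fin d → ℤ) (hk : k ≠ 0) :
    (∑' f : {f : (Fin d → ℤ) →₀ ℕ // f.sum (fun _ n => n) = N},
        ((f : (Fin d → ℤ) →₀ ℕ) k : ℝ) * Real.exp (-β * canonicalEnergy d L f)) /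
        canonicalY d L β N ≤
      (Real.exp (β * ∑ j, ((2 * π / L) * (k j : ℝ)) ^ 2) - 1)⁻¹ ∧
    (Real.exp (β * ∑ j, ((2 * π / L) * (k j : ℝ)) ^ 2) - 1)⁻¹ ≤
      (β * ∑ j, ((2 * π / L) * (k j : ℝ)) ^ 2)⁻¹ := by
  set ε : ℝ := ∑ j, ((2 * π / L) * (k j : ℝ)) ^ 2 with hε_def
  have hε : 0 < ε := by
    rcases Function.ne_iff.1 hk with ⟨j, hj⟩
    have hc : (2 * π / L) ≠ 0 := by
      have := Real.pi_pos
      positivity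
    have hterm : 0 < ((2 * π / L) * (k j : ℝ)) ^ 2 := by
      have : ((2 * π / L) * (k j : ℝ)) ≠ 0 := by
        apply mul_ne_zero hc
        exact_mod_cast hj
      positivity
    exact Finset.sum_pos' (fun i _ => by positivity) ⟨j, Finset.mem_univ j, hterm⟩
  have hβε : 0 < β * ε := mul_pos hβ hε
  have hE1 : β * ε ≤ Real.exp (β * ε) - 1 := by
    have := Real.add_one_le_exp (β * ε)
    linarith
  have hEpos : 0 < Real.exp (β * ε) - 1 := lt_of_lt_of_le hβε hE1
  refine ⟨?_, ?_⟩
  swap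
  · exact inv_anti₀ hβε hE1
  -- main bound
  set A := {f : (Fin d → ℤ) →₀ ℕ // f.sum (fun _ n => n) = N} with hA
  set w : A → ℝ := fun f => Real.exp (-β * canonicalEnergy d L f) with hw
  set g : A → ℝ := fun f => ((f : (Fin d → ℤ) →₀ ℕ) k : ℝ) * w f with hg
  have hwpos : ∀ f : A, 0 < w f := fun f => Real.exp_pos _
  have hgnn : ∀ f : A, 0 ≤ g f := fun f => mul_nonneg (Nat.cast_nonneg _) (hwpos f).le
  show (∑' f : A, g f) / canonicalY d L β N ≤ (Real.exp (β * ε) - 1)⁻¹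
  by_cases hY : Summable w
  swap
  · rw [show canonicalY d L β N = ∑' f : A, w f from rfl, tsum_eq_zero_of_not_summable hY,
      div_zero]
    positivity
  have hYpos : 0 < canonicalY d L β N := by
    have hf0 : (Finsupp.single (0 : Fin d → ℤ) N).sum (fun _ n => n) = N :=
      Finsupp.sum_single_index rfl
    have := Summable.le_tsum hY ⟨_, hf0⟩ (fun f _ => (hwpos f).le)
    calc (0:ℝ) < w ⟨_, hf0⟩ := hwpos _
      _ ≤ canonicalY d L β N := this
  by_cases hS : Summable g
  swap
  · rw [tsum_eq_zero_of_not_summable hS, zero_div]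
    positivity
  -- the injection
  set B := {p : A // 1 ≤ (p : (Fin d → ℤ) →₀ ℕ) k} with hB
  have hsub : ∀ p : B, (p : (Fin d → ℤ) →₀ ℕ) - Finsupp.single k 1 + Finsupp.single k 1
      = (p : (Fin d → ℤ) →₀ ℕ) := by
    intro p
    apply tsub_add_cancel_of_le
    rw [Finsupp.le_iff]
    intro i hi
    rw [Finsupp.support_single_ne_zero _ one_ne_zero, Finset.mem_singleton] at hi
    subst hi
    simpa using p.2
  have hι_sum : ∀ p : B, ((p : (Fin d → ℤ) →₀ ℕ) - Finsupp.single k 1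
      + Finsupp.single 0 1).sum (fun _ n => n) = N := by
    intro p
    have h1 : ((p : (Fin d → ℤ) →₀ ℕ) - Finsupp.single k 1).sum (fun _ n => n) + 1 = N := by
      have := numsum_add d ((p : (Fin d → ℤ) →₀ ℕ) - Finsupp.single k 1) (Finsupp.single k 1)
      rw [hsub p] at this
      have hs1 : (Finsupp.single k 1).sum (fun (_ : Fin d → ℤ) (n : ℕ) => n) = 1 :=
        Finsupp.sum_single_index rfl
      rw [hs1] at this
      rw [← this]
      exact (p : A).2.symm ▸ rfl
    rw [numsum_add, Finsupp.sum_single_index rfl]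
    omega
  set ι : B → A := fun p => ⟨(p : (Fin d → ℤ) →₀ ℕ) - Finsupp.single k 1
      + Finsupp.single 0 1, hι_sum p⟩ with hι
  have hιinj : Function.Injective ι := by
    intro p q hpq
    have h1 : (p : (Fin d → ℤ) →₀ ℕ) - Finsupp.single k 1
        = (q : (Fin d → ℤ) →₀ ℕ) - Finsupp.single k 1 := by
      have := congrArg Subtype.val hpq
      simpa [hι] using add_right_cancel this
    have : (p : (Fin d → ℤ) →₀ ℕ) = (q : (Fin d → ℤ) →₀ ℕ) := by
      rw [← hsub p, h1, hsub q]
    exact Subtype.ext (Subtype.ext this)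
  -- energy relation
  have hEp : ∀ p : B, canonicalEnergy d L (p : (Fin d → ℤ) →₀ ℕ)
      = canonicalEnergy d L (ι p : (Fin d → ℤ) →₀ ℕ) + ε := by
    intro p
    have h1 := energy_add d L ((p : (Fin d → ℤ) →₀ ℕ) - Finsupp.single k 1) (Finsupp.single k 1)
    rw [hsub p] at h1
    have h2 := energy_add d L ((p : (Fin d → ℤ) →₀ ℕ) - Finsupp.single k 1) (Finsupp.single 0 1)
    rw [h1, h2, energy_single, energy_zero_mode]
    push_cast
    ring
  -- value at k
  have hval : ∀ p : B, ((ι p : (Fin d → ℤ) →₀ ℕ) k : ℝ) + 1 = ((p : (Fin d → ℤ) →₀ ℕ) k : ℝ) := by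
    intro p
    have h0k : (Finsupp.single (0 : Fin d → ℤ) 1) k = 0 := by
      rw [Finsupp.single_apply, if_neg (fun h => hk h.symm)]
    have hkk := Finsupp.tsub_apply ((p : A) : (Fin d → ℤ) →₀ ℕ) (Finsupp.single k 1) k
    rw [Finsupp.single_eq_same] at hkk
    have : (ι p : (Fin d → ℤ) →₀ ℕ) k = (p : (Fin d → ℤ) →₀ ℕ) k - 1 := by
      simp [hι, Finsupp.add_apply, hkk, h0k]
    rw [this]
    have hp1 := p.2
    push_cast [Nat.cast_sub hp1]
    ring
  -- key identity
  have hkey : ∀ p : B, g (p : A) = Real.exp (-(β * ε)) * (g (ι p) + w (ι p)) := by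
    intro p
    have hwrel : w (p : A) = Real.exp (-(β * ε)) * w (ι p) := by
      rw [hw]
      simp only
      rw [hEp p, ← Real.exp_add]
      ring_nf
    rw [hg]
    simp only
    rw [hwrel, ← hval p]
    ring
  -- summability of composites
  have hScomp : Summable (fun p : B => g (ι p)) := hS.comp_injective hιinj
  have hYcomp : Summable (fun p : B => w (ι p)) := hY.comp_injective hιinj
  -- S restricted to B
  have hrestrict : ∑' f : A, g f = ∑' p : B, g (p : A) := by
    exact (tsum_subtype_eq_of_support_subset (s := {p : A | 1 ≤ (p : (Fin d → ℤ) →₀ ℕ) k}) (by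
      intro f hf
      simp only [Function.mem_support, hg] at hf
      have : (f : (Fin d → ℤ) →₀ ℕ) k ≠ 0 := by
        intro h
        apply hf
        rw [h]
        simp
      exact Nat.one_le_iff_ne_zero.2 this)).symm
  set S : ℝ := ∑' f : A, g f with hSdef
  set Y : ℝ := canonicalY d L β N with hYdef
  have hSnn : 0 ≤ S := tsum_nonneg hgnn
  have hmain : S ≤ Real.exp (-(β * ε)) * (S + Y) := by
    calc S = ∑' p : B, g (p : A) := hrestrict
      _ = ∑' p : B, Real.exp (-(β * ε)) * (g (ι p) + w (ι p)) := by
          exact tsum_congr hkey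
      _ = Real.exp (-(β * ε)) * ((∑' p : B, g (ι p)) + ∑' p : B, w (ι p)) := by
          rw [tsum_mul_left, Summable.tsum_add hScomp hYcomp]
      _ ≤ Real.exp (-(β * ε)) * (S + Y) := by
          apply mul_le_mul_of_nonneg_left _ (Real.exp_pos _).le
          apply add_le_add
          · exact Summable.tsum_le_tsum_of_inj ι hιinj (fun c _ => hgnn c) (fun b => le_rfl) hScomp hS
          · exact Summable.tsum_le_tsum_of_inj ι hιinj (fun c _ => (hwpos c).le) (fun b => le_rfl)
              hYcomp hY
  -- finish algebra
  rw [div_le_iff₀ hYpos]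
  have hexp : Real.exp (-(β * ε)) * Real.exp (β * ε) = 1 := by
    rw [← Real.exp_add]; simp
  have h2 : S * Real.exp (β * ε) ≤ S + Y := by
    have h := mul_le_mul_of_nonneg_right hmain (Real.exp_pos (β * ε)).le
    rw [mul_comm (Real.exp (-(β * ε))) (S + Y), mul_assoc, hexp, mul_one] at h
    exact h
  have h3 : S * (Real.exp (β * ε) - 1) ≤ Y := by nlinarith
  calc S ≤ Y / (Real.exp (β * ε) - 1) := by
        rw [le_div_iff₀ hEpos]; exact h3
    _ = (Real.exp (β * ε) - 1)⁻¹ * Y := by rw [div_eq_mul_inv, mul_comm]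
end
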